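/- For s₁ > 1 and s_i ≥ 1 for i = 2,…,k, the multiple series ζ̃(s₁,…,s_k) = ∑_{n₁ ≥ n₂ ≥ ⋯ ≥ n_k ≥ 1} n₁^{-s₁} ⋯ n_k^{-s_k} converges. -/

import Mathlib

open Finset in
lemma summable_pi_prod (k : ℕ) (f : ℕ+ → ℝ) (hf0 : ∀ m, 0 ≤ f m)
    (hf : Summable f) :
    Summable (fun n : Fin k → ℕ+ => ∏ i, f (n i)) := by
  induction k with
  | zero =>
      simp only [Finset.univ_eq_empty, Finset.prod_empty]
      exact summable_of_finite_support (Set.toFinite _)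
  | succ k ih =>
      have h2 : Summable (fun p : ℕ+ × (Fin k → ℕ+) => f p.1 * ∏ i, f (p.2 i)) :=
        Summable.mul_of_nonneg (f := f) (g := fun n : Fin k → ℕ+ => ∏ i, f (n i))
          hf ih hf0 (fun n => Finset.prod_nonneg fun i _ => hf0 _)
      rw [← (Fin.consEquiv (fun _ : Fin (k + 1) => ℕ+)).summable_iff]
      refine h2.congr fun p => ?_
      simp [Fin.prod_univ_succ]

/-- Convergence of the multiple zeta series `∑_{n₁ ≥ n₂ ≥ ⋯ ≥ n_k ≥ 1} n₁^{-s₁} ⋯ n_k^{-s_k}`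
when `s₁ > 1` and `s_i ≥ 1` for all `i`. -/
theorem multiple_zeta_summable (k : ℕ) (hk : 0 < k) (s : Fin k → ℝ)
    (h1 : 1 < s ⟨0, hk⟩) (hs : ∀ i, 1 ≤ s i) :
    Summable (fun n : {n : Fin k → ℕ+ // Antitone n} =>
      ∏ i, ((n.1 i : ℕ) : ℝ) ^ (-(s i))) := by
  set i0 : Fin k := ⟨0, hk⟩
  set δ : ℝ := s i0 - 1 with hδ
  have hδpos : 0 < δ := by simp [hδ]; linarith
  set t : ℝ := δ / k with ht
  have htpos : 0 < t := div_pos hδpos (by exact_mod_cast hk)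
  -- dominating function
  set g : ℕ+ → ℝ := fun m => ((m : ℕ) : ℝ) ^ (-(1 + t)) with hg
  have hg0 : ∀ m, 0 ≤ g m := fun m => Real.rpow_nonneg (by positivity) _
  have hgs : Summable g := by
    have : Summable (fun n : ℕ => (n : ℝ) ^ (-(1 + t))) :=
      Real.summable_nat_rpow.mpr (by linarith)
    exact this.comp_injective (fun a b h => PNat.coe_injective h)
  have hG : Summable (fun n : Fin k → ℕ+ => ∏ i, g (n i)) :=
    summable_pi_prod k g hg0 hgs
  have hGsub : Summable (fun n : {n : Fin k → ℕ+ // Antitone n} => ∏ i, g (n.1 i)) :=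
    hG.subtype _
  refine hGsub.of_nonneg_of_le (fun n => Finset.prod_nonneg fun i _ => Real.rpow_nonneg (by positivity) _) ?_
  intro n
  obtain ⟨n, hn⟩ := n
  have hb : ∀ i : Fin k, (1 : ℝ) ≤ ((n i : ℕ) : ℝ) := by
    intro i; exact_mod_cast (n i).one_le
  have hbpos : ∀ i : Fin k, (0 : ℝ) < ((n i : ℕ) : ℝ) := fun i => lt_of_lt_of_le one_pos (hb i)
  -- step 1 : ∏ n_i^{-s i} ≤ (n 0)^{-δ} * ∏ n_i^{-1}
  have step1 : ∏ i, ((n i : ℕ) : ℝ) ^ (-(s i)) ≤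
      ((n i0 : ℕ) : ℝ) ^ (-δ) * ∏ i, ((n i : ℕ) : ℝ) ^ (-(1 : ℝ)) := by
    have : ∏ i, ((n i : ℕ) : ℝ) ^ (-(s i)) ≤
        ∏ i, (((n i : ℕ) : ℝ) ^ (-(1 : ℝ)) * (if i = i0 then ((n i0 : ℕ) : ℝ) ^ (-δ) else 1)) := by
      refine Finset.prod_le_prod (fun i _ => Real.rpow_nonneg (by positivity) _) ?_
      intro i _
      by_cases h : i = i0
      · subst h
        rw [if_pos rfl, ← Real.rpow_add (hbpos i0)]
        have : -(s i0) = -1 + -δ := by simp [hδ]; ring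
        rw [this]
      · rw [if_neg h, mul_one]
        exact Real.rpow_le_rpow_of_exponent_le (hb i) (by linarith [hs i])
    calc ∏ i, ((n i : ℕ) : ℝ) ^ (-(s i)) ≤ _ := this
      _ = ((n i0 : ℕ) : ℝ) ^ (-δ) * ∏ i, ((n i : ℕ) : ℝ) ^ (-(1 : ℝ)) := by
          rw [Finset.prod_mul_distrib, Finset.prod_ite_eq' Finset.univ i0
            (fun _ => ((n i0 : ℕ) : ℝ) ^ (-δ))]
          simp [mul_comm]
  -- step 2 : (n 0)^{-δ} ≤ ∏ n_i^{-t}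
  have step2 : ((n i0 : ℕ) : ℝ) ^ (-δ) ≤ ∏ i, ((n i : ℕ) : ℝ) ^ (-t) := by
    have hcard : ((n i0 : ℕ) : ℝ) ^ (-δ) = ∏ _i : Fin k, ((n i0 : ℕ) : ℝ) ^ (-t) := by
      rw [Finset.prod_const, ← Real.rpow_natCast (((n i0 : ℕ) : ℝ) ^ (-t)),
        ← Real.rpow_mul (le_of_lt (hbpos i0))]
      congr 1
      have hk0 : (k : ℝ) ≠ 0 := by exact_mod_cast hk.ne'
      simp only [Finset.card_univ, Fintype.card_fin]
      rw [ht, neg_mul, div_mul_cancel₀ δ hk0]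
    rw [hcard]
    refine Finset.prod_le_prod (fun i _ => Real.rpow_nonneg (by positivity) _) ?_
    intro i _
    refine Real.rpow_le_rpow_of_nonpos (hbpos i) ?_ (by linarith)
    have : n i ≤ n i0 := hn (by simp [i0, Fin.le_def])
    exact_mod_cast this
  calc ∏ i, ((n i : ℕ) : ℝ) ^ (-(s i))
      ≤ ((n i0 : ℕ) : ℝ) ^ (-δ) * ∏ i, ((n i : ℕ) : ℝ) ^ (-(1 : ℝ)) := step1
    _ ≤ (∏ i, ((n i : ℕ) : ℝ) ^ (-t)) * ∏ i, ((n i : ℕ) : ℝ) ^ (-(1 : ℝ)) := by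
        refine mul_le_mul_of_nonneg_right step2 ?_
        exact Finset.prod_nonneg fun i _ => Real.rpow_nonneg (by positivity) _
    _ = ∏ i, g (n i) := by
        rw [← Finset.prod_mul_distrib]
        refine Finset.prod_congr rfl fun i _ => ?_
        rw [hg, ← Real.rpow_add (hbpos i)]
        ring_nf
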